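/- Let C be an n×n real matrix whose kernel is a mixed subspace (contains no nonzero componentwise-nonnegative vector). Then for every t ∈ ℝ^n the set of nonnegative integer vectors v ∈ ℕ₀^n satisfying C v = t is finite. -/

import Mathlib

/-- If `C` is an `n × n` real matrix whose kernel is mixed (every nonzero element
of the kernel has both a strictly positive and a strictly negative coordinate), then for every
`t ∈ ℝⁿ` the set of nonnegative integer vectors `v` with `C v = t` is finite. -/
theorem finitely_many_nonneg_integer_solutions (n : ℕ) (C : Matrix (Fin n) (Fin n) ℝ)
    (hmix : ∀ u : Fin n → ℝ, C.mulVec u = 0 → u ≠ 0 → (∃ k, 0 < u k) ∧ (∃ k, u k < 0))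
    (t : Fin n → ℝ) :
    {v : Fin n → ℤ | (∀ k, 0 ≤ v k) ∧ C.mulVec (fun k => (v k : ℝ)) = t}.Finite := by
  set S := {v : Fin n → ℤ | (∀ k, 0 ≤ v k) ∧ C.mulVec (fun k => (v k : ℝ)) = t} with hSdef
  have hbound : ∃ M : ℝ, ∀ v ∈ S, ‖(fun k => (v k : ℝ) : Fin n → ℝ)‖ ≤ M := by
    by_contra h
    push_neg at h
    choose f hfS hfn using fun m : ℕ => h m
    set x : ℕ → Fin n → ℝ := fun m k => (f m k : ℝ) with hxdef
    have hnorm : ∀ m : ℕ, (m : ℝ) < ‖x m‖ := hfn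
    have hpos : ∀ m : ℕ, 0 < ‖x m‖ := fun m =>
      lt_of_le_of_lt (Nat.cast_nonneg m) (hnorm m)
    set u : ℕ → Fin n → ℝ := fun m => ‖x m‖⁻¹ • x m with hudef
    have hu : ∀ m, u m ∈ Metric.sphere (0 : Fin n → ℝ) 1 := by
      intro m
      simp only [Metric.mem_sphere, dist_zero_right, hudef, norm_smul, norm_inv,
        norm_norm]
      exact inv_mul_cancel₀ (ne_of_gt (hpos m))
    obtain ⟨u₀, hu₀, φ, hφmono, hφtend⟩ :=
      (isCompact_sphere (0 : Fin n → ℝ) 1).tendsto_subseq hu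
    -- continuity of mulVec
    have hcont : Continuous (fun w : Fin n → ℝ => C.mulVec w) := by
      have := (Matrix.mulVecLin C).continuous_of_finiteDimensional
      exact this
    have hCx : ∀ m, C.mulVec (x m) = t := fun m => (hfS m).2
    have hCu : ∀ m, C.mulVec (u m) = ‖x m‖⁻¹ • t := by
      intro m
      simp only [hudef, Matrix.mulVec_smul, hCx]
    -- limit of C.mulVec (u (φ m)) is 0
    have htend0 : Filter.Tendsto (fun m => C.mulVec (u (φ m))) Filter.atTop (nhds 0) := by
      simp only [hCu]
      have hinv : Filter.Tendsto (fun m => ‖x (φ m)‖⁻¹) Filter.atTop (nhds 0) := by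
        apply tendsto_inv_atTop_zero.comp
        apply Filter.tendsto_atTop_mono (fun m => ?_) tendsto_natCast_atTop_atTop
        calc (m : ℝ) ≤ (φ m : ℝ) := by exact_mod_cast hφmono.le_apply
          _ ≤ ‖x (φ m)‖ := (hnorm (φ m)).le
      simpa using hinv.smul_const t
    have htendC : Filter.Tendsto (fun m => C.mulVec (u (φ m))) Filter.atTop
        (nhds (C.mulVec u₀)) := (hcont.tendsto u₀).comp hφtend
    have hker : C.mulVec u₀ = 0 := tendsto_nhds_unique htendC htend0
    have hne : u₀ ≠ 0 := by
      intro h0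
      have : ‖u₀‖ = 1 := by simpa using hu₀
      rw [h0] at this
      simp at this
    have hnonneg : ∀ k, 0 ≤ u₀ k := by
      intro k
      have hk : Filter.Tendsto (fun m => u (φ m) k) Filter.atTop (nhds (u₀ k)) :=
        (tendsto_pi_nhds.mp hφtend) k
      refine le_of_tendsto_of_tendsto' tendsto_const_nhds hk ?_
      intro m
      have h1 : (0 : ℝ) ≤ x (φ m) k := by
        simp only [hxdef]
        exact_mod_cast (hfS (φ m)).1 k
      have h2 : (0 : ℝ) ≤ ‖x (φ m)‖⁻¹ := inv_nonneg.mpr (hpos (φ m)).le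
      simpa [hudef] using mul_nonneg h2 h1
    obtain ⟨_, k, hk⟩ := hmix u₀ hker hne
    exact absurd (hnonneg k) (not_le.mpr hk)
  obtain ⟨M, hM⟩ := hbound
  apply Set.Finite.subset (Set.finite_Icc (0 : Fin n → ℤ) (fun _ => ⌈M⌉))
  intro v hv
  constructor
  · intro k; exact hv.1 k
  · intro k
    have h1 : (v k : ℝ) ≤ ‖(fun k => (v k : ℝ) : Fin n → ℝ)‖ := by
      calc (v k : ℝ) ≤ |(v k : ℝ)| := le_abs_self _
        _ ≤ _ := by
          simpa using norm_le_pi_norm (fun k => (v k : ℝ) : Fin n → ℝ) k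
    have h2 : (v k : ℝ) ≤ M := h1.trans (hM v hv)
    exact_mod_cast h2.trans (Int.le_ceil M)
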